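/- arXiv:0809.0827 — 5 statements merged into one kernel-verified Lean document; each statement's English description precedes it below -/
import Mathlib

section
/- For graphs P_1, …, P_m of orders p_1, …, p_m, let A be a Laplacian matrix of any graph product P_1 ⋄ ⋯ ⋄ P_m with tr(A) ≠ 0. Then (1/tr(A))·A is a separable density matrix in C^{p_1} × ⋯ × C^{p_m}. -/
open Matrix Finset
open scoped ComplexOrder

/-- A complex matrix is row diagonally dominant. -/
def RowDiagDom {α : Type*} [Fintype α] [DecidableEq α] (M : Matrix α α ℂ) : Prop :=
  ∀ i, (M i i).im = 0 ∧ ∑ j ∈ Finset.univ.erase i, ‖M i j‖ ≤ (M i i).re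

/-- A density matrix: Hermitian positive semidefinite with unit trace. -/
def IsDensityMatrix {α : Type*} [Fintype α] [DecidableEq α] (M : Matrix α α ℂ) : Prop :=
  M.PosSemidef ∧ M.trace = 1

/-- Tensor (Kronecker) product of a family of matrices, indexed by tuples. -/
def tensorFamily {m : ℕ} {p : Fin m → ℕ}
    (M : ∀ i, Matrix (Fin (p i)) (Fin (p i)) ℂ) :
    Matrix (∀ i, Fin (p i)) (∀ i, Fin (p i)) ℂ :=
  Matrix.of fun x y => ∏ i, M i (x i) (y i)

/-- Multipartite separability: A is a convex combination of tensor products of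
density matrices on the factors ℂ^{p_1}, …, ℂ^{p_m}. -/
def SepDensityFamily {m : ℕ} {p : Fin m → ℕ}
    (A : Matrix (∀ i, Fin (p i)) (∀ i, Fin (p i)) ℂ) : Prop :=
  ∃ (k : ℕ) (c : Fin k → ℝ) (ρ : Fin k → ∀ i, Matrix (Fin (p i)) (Fin (p i)) ℂ),
    (∀ t, 0 ≤ c t) ∧ (∑ t, c t = 1) ∧ (∀ t i, IsDensityMatrix (ρ t i)) ∧
    A = ∑ t, (c t : ℂ) • tensorFamily (ρ t)

open scoped Classical

/-- Per-coordinate relations used to define graph products: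
`0` = adjacent, `1` = equal, `2` = distinct and non-adjacent. -/
def coordRel {α : Type*} (G : SimpleGraph α) : Fin 3 → α → α → Prop
  | 0 => G.Adj
  | 1 => fun u w => u = w
  | 2 => fun u w => u ≠ w ∧ ¬ G.Adj u w

lemma coordRel_symm {α : Type*} (G : SimpleGraph α) (c : Fin 3) {u w : α}
    (h : coordRel G c u w) : coordRel G c w u := by
  fin_cases c
  · exact G.adj_symm h
  · exact h.symm
  · exact ⟨h.1.symm, fun ha => h.2 (G.adj_symm ha)⟩

/-- The graph product of a family of graphs `P i`, determined by the set `S` of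
condition vectors: two distinct tuples are adjacent iff some condition `c ∈ S`
holds in every coordinate. -/
def graphProdFamily {m : ℕ} {p : Fin m → ℕ} (P : ∀ i, SimpleGraph (Fin (p i)))
    (S : Finset (Fin m → Fin 3)) : SimpleGraph (∀ i, Fin (p i)) where
  Adj x y := x ≠ y ∧ ∃ c ∈ S, ∀ i, coordRel (P i) (c i) (x i) (y i)
  symm := ⟨by
    rintro x y ⟨hxy, c, hc, h⟩
    exact ⟨hxy.symm, c, hc, fun i => coordRel_symm (P i) (c i) (h i)⟩⟩
  loopless := ⟨fun x h => h.1 rfl⟩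

/-- The 0-1 adjacency matrix of a graph, over ℂ. -/
noncomputable def adjMatC {α : Type*} [Fintype α] (G : SimpleGraph α) : Matrix α α ℂ :=
  Matrix.of fun u v => if G.Adj u v then 1 else 0

/-- The Laplacian matrix D - B, where D is the diagonal matrix of row sums of the
(0-1) adjacency matrix B. -/
noncomputable def lapMat {α : Type*} [Fintype α] [DecidableEq α] (G : SimpleGraph α) :
    Matrix α α ℂ :=
  Matrix.diagonal (fun x => ∑ y, adjMatC G x y) - adjMatC G

namespace Stmt9Aux

/-! Auxiliary machinery for `stmt_9`. -/

/-- Per-coordinate vector `e_x - σ e_y` (indicator of `e` when `e = f`). -/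
def uV {n : ℕ} (e f : Fin n) (s : Bool) : Fin n → ℂ :=
  fun a => (if a = e then 1 else 0)
    - (if e = f then 0 else (if s then 1 else -1) * (if a = f then 1 else 0))

lemma uV_star {n : ℕ} (e f : Fin n) (s : Bool) (a : Fin n) :
    star (uV e f s a) = uV e f s a := by
  unfold uV; split_ifs <;> simp

/-- Normalized rank-one per-coordinate density matrix. -/
noncomputable def rho1 {n : ℕ} (e f : Fin n) (s : Bool) : Matrix (Fin n) (Fin n) ℂ :=
  Matrix.of fun a b => (if e = f then 1 else (2:ℂ)⁻¹) * (uV e f s a * uV e f s b)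

lemma rho1_posSemidef {n : ℕ} (e f : Fin n) (s : Bool) : (rho1 e f s).PosSemidef := by
  set c : ℝ := if e = f then 1 else (Real.sqrt 2)⁻¹ with hc
  have h2 : ((c : ℂ)) * (c : ℂ) = (if e = f then 1 else (2:ℂ)⁻¹) := by
    rcases em (e = f) with h | h
    · simp [hc, h]
    · simp only [hc, h, if_false]
      norm_cast
      rw [← mul_inv, Real.mul_self_sqrt (by norm_num)]
      norm_num
  have hB : rho1 e f s = (Matrix.of fun (_ : Fin 1) a => (c:ℂ) * uV e f s a)ᴴ
      * (Matrix.of fun (_ : Fin 1) a => (c:ℂ) * uV e f s a) := by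
    ext a b
    simp only [rho1, Matrix.mul_apply, Matrix.conjTranspose_apply, Matrix.of_apply,
      Fin.sum_univ_one, star_mul', uV_star, Complex.star_def, Complex.conj_ofReal]
    rw [← h2]; ring
  rw [hB]
  exact Matrix.posSemidef_conjTranspose_mul_self _

lemma uV_sq {n : ℕ} (e f : Fin n) (s : Bool) (a : Fin n) :
    uV e f s a * uV e f s a
      = (if e = f then (if a = e then 1 else 0)
         else (if a = e then 1 else 0) + (if a = f then 1 else 0)) := by
  unfold uV
  rcases em (e = f) with h | h <;> by_cases h1 : a = e <;> by_cases h2 : a = f <;>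
      cases s <;> simp_all

lemma rho1_trace {n : ℕ} (e f : Fin n) (s : Bool) : (rho1 e f s).trace = 1 := by
  unfold Matrix.trace rho1
  simp only [Matrix.diag_apply, Matrix.of_apply, uV_sq]
  rcases em (e = f) with h | h
  · simp [h]
  · simp [h, Finset.sum_add_distrib, ← Finset.mul_sum]
    norm_num

lemma keyA {n : ℕ} (e f α β : Fin n) :
    (∑ s : Bool, uV e f s α * uV e f s β)
      = (if e = f then 1 else 2) *
        ∑ t : Bool, (if α = (if t then f else e) then (1:ℂ) else 0) *
          (if β = (if t then f else e) then 1 else 0) := by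
  simp only [Fintype.sum_bool, uV, if_true, if_false, Bool.false_eq_true]
  split_ifs <;> first
    | ring1
    | (subst_vars; simp_all)

lemma keyB {n : ℕ} (e f α β : Fin n) :
    (∑ s : Bool, (if e = f then 1 else if s then -1 else 1) * (uV e f s α * uV e f s β))
      = (if e = f then 1 else 2) *
        ∑ t : Bool, (if α = (if t then f else e) then (1:ℂ) else 0) *
          (if β = (if t then e else f) then 1 else 0) := by
  simp only [Fintype.sum_bool, uV, if_true, if_false, Bool.false_eq_true]
  split_ifs <;> first
    | ring1
    | (subst_vars; simp_all)

variable {m : ℕ} {p : Fin m → ℕ}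

/-- Mixing two tuples according to a boolean pattern. -/
def mixV (x y : ∀ i, Fin (p i)) (t : Fin m → Bool) : ∀ i, Fin (p i) :=
  fun i => if t i then y i else x i

/-- Family of per-coordinate density matrices attached to a pair of tuples
and a sign pattern. -/
noncomputable def rhoF (x y : ∀ i, Fin (p i)) (s : Fin m → Bool) :
    ∀ i, Matrix (Fin (p i)) (Fin (p i)) ℂ := fun i => rho1 (x i) (y i) (s i)

/-- The weight of the term indexed by pair `(x, y)` and sign pattern `s`. -/
noncomputable def coefR (x y : ∀ i, Fin (p i)) (s : Fin m → Bool) : ℝ :=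
  (1 - ∏ i, (if x i = y i then (1:ℝ) else if s i then -1 else 1)) / 2 ^ m

lemma coefR_nonneg (x y : ∀ i, Fin (p i)) (s : Fin m → Bool) : 0 ≤ coefR x y s := by
  have h : |∏ i, (if x i = y i then (1:ℝ) else if s i then -1 else 1)| = 1 := by
    rw [Finset.abs_prod]
    exact Finset.prod_eq_one fun i _ => by split_ifs <;> simp
  have h2 := (abs_le.mp h.le).2
  unfold coefR
  apply div_nonneg (by linarith) (by positivity)

lemma coefR_cast (x y : ∀ i, Fin (p i)) (s : Fin m → Bool) :
    ((coefR x y s : ℝ) : ℂ)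
      = (1 - ∏ i, (if x i = y i then (1:ℂ) else if s i then -1 else 1)) / 2 ^ m := by
  unfold coefR
  push_cast
  congr 2
  exact Finset.prod_congr rfl fun i _ => by split_ifs <;> simp

lemma indicator_eq (a u : ∀ i, Fin (p i)) :
    (if a = u then (1:ℂ) else 0) = ∏ i, if a i = u i then 1 else 0 := by
  rw [Finset.prod_boole]
  simp [funext_iff]

lemma key1 (x y a b : ∀ i, Fin (p i)) :
    ∑ s : Fin m → Bool, (coefR x y s : ℂ) * tensorFamily (rhoF x y s) a b
    = (2 ^ m : ℂ)⁻¹ * ∑ t : Fin m → Bool,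
        (if a = mixV x y t then (1:ℂ) else 0) *
          ((if b = mixV x y t then 1 else 0) - (if b = mixV x y (fun i => !t i) then 1 else 0)) := by
  classical
  set K : ℂ := ∏ i, (if x i = y i then (1:ℂ) else 2) with hK
  have hKne : K ≠ 0 := by
    rw [hK]
    exact Finset.prod_ne_zero_iff.mpr fun i _ => by split_ifs <;> norm_num
  have htens : ∀ s : Fin m → Bool, tensorFamily (rhoF x y s) a b
      = K⁻¹ * ∏ i, (uV (x i) (y i) (s i) (a i) * uV (x i) (y i) (s i) (b i)) := by
    intro s
    show (∏ i, rho1 (x i) (y i) (s i) (a i) (b i)) = _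
    rw [hK, ← Finset.prod_inv_distrib]
    rw [← Finset.prod_mul_distrib]
    refine Finset.prod_congr rfl fun i _ => ?_
    show (if x i = y i then 1 else (2:ℂ)⁻¹) * _ = _
    congr 1
    split_ifs <;> simp
  have hL : ∑ s : Fin m → Bool, (coefR x y s : ℂ) * tensorFamily (rhoF x y s) a b
      = (2 ^ m : ℂ)⁻¹ * K⁻¹ *
        ((∑ s : Fin m → Bool, ∏ i, (uV (x i) (y i) (s i) (a i) * uV (x i) (y i) (s i) (b i)))
         - ∑ s : Fin m → Bool, ∏ i, ((if x i = y i then (1:ℂ) else if s i then -1 else 1) *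
              (uV (x i) (y i) (s i) (a i) * uV (x i) (y i) (s i) (b i)))) := by
    rw [mul_sub, Finset.mul_sum, Finset.mul_sum, ← Finset.sum_sub_distrib]
    refine Finset.sum_congr rfl fun s _ => ?_
    have hsplit : (∏ i, ((if x i = y i then (1:ℂ) else if s i then -1 else 1) *
          (uV (x i) (y i) (s i) (a i) * uV (x i) (y i) (s i) (b i))))
        = (∏ i, (if x i = y i then (1:ℂ) else if s i then -1 else 1)) *
          ∏ i, (uV (x i) (y i) (s i) (a i) * uV (x i) (y i) (s i) (b i)) :=
      Finset.prod_mul_distrib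
    rw [htens s, coefR_cast, hsplit, div_eq_mul_inv]
    ring1
  rw [hL]
  rw [← Fintype.prod_sum (fun i (c : Bool) => uV (x i) (y i) c (a i) * uV (x i) (y i) c (b i))]
  rw [← Fintype.prod_sum (fun i (c : Bool) => (if x i = y i then (1:ℂ) else if c then -1 else 1) *
        (uV (x i) (y i) c (a i) * uV (x i) (y i) c (b i)))]
  have hA : (∏ i, ∑ c : Bool, uV (x i) (y i) c (a i) * uV (x i) (y i) c (b i))
      = K * ∏ i, ∑ t : Bool, (if a i = (if t then y i else x i) then (1:ℂ) else 0) *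
          (if b i = (if t then y i else x i) then 1 else 0) := by
    rw [hK, ← Finset.prod_mul_distrib]
    exact Finset.prod_congr rfl fun i _ => keyA (x i) (y i) (a i) (b i)
  have hB : (∏ i, ∑ c : Bool, (if x i = y i then (1:ℂ) else if c then -1 else 1) *
        (uV (x i) (y i) c (a i) * uV (x i) (y i) c (b i)))
      = K * ∏ i, ∑ t : Bool, (if a i = (if t then y i else x i) then (1:ℂ) else 0) *
          (if b i = (if t then x i else y i) then 1 else 0) := by
    rw [hK, ← Finset.prod_mul_distrib]
    exact Finset.prod_congr rfl fun i _ => keyB (x i) (y i) (a i) (b i)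
  rw [hA, hB]
  rw [Fintype.prod_sum (fun i (t : Bool) => (if a i = (if t then y i else x i) then (1:ℂ) else 0) *
        (if b i = (if t then y i else x i) then 1 else 0))]
  rw [Fintype.prod_sum (fun i (t : Bool) => (if a i = (if t then y i else x i) then (1:ℂ) else 0) *
        (if b i = (if t then x i else y i) then 1 else 0))]
  have hmix1 : ∀ t : Fin m → Bool,
      (∏ i, (if a i = (if t i then y i else x i) then (1:ℂ) else 0) *
        (if b i = (if t i then y i else x i) then 1 else 0))
      = (if a = mixV x y t then (1:ℂ) else 0) * (if b = mixV x y t then 1 else 0) := by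
    intro t
    rw [Finset.prod_mul_distrib, indicator_eq a (mixV x y t), indicator_eq b (mixV x y t)]
    rfl
  have hmix2 : ∀ t : Fin m → Bool,
      (∏ i, (if a i = (if t i then y i else x i) then (1:ℂ) else 0) *
        (if b i = (if t i then x i else y i) then 1 else 0))
      = (if a = mixV x y t then (1:ℂ) else 0) * (if b = mixV x y (fun i => !t i) then 1 else 0) := by
    intro t
    rw [Finset.prod_mul_distrib, indicator_eq a (mixV x y t),
      indicator_eq b (mixV x y (fun i => !t i))]
    congr 1
    refine Finset.prod_congr rfl fun i _ => ?_
    have h : mixV x y (fun i => !t i) i = if t i then x i else y i := by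
      show (if !t i then y i else x i) = _
      cases t i <;> rfl
    rw [h]
  have hS : ∀ (S1 S2 R : ℂ), S1 - S2 = R →
      (2 ^ m : ℂ)⁻¹ * K⁻¹ * (K * S1 - K * S2) = (2 ^ m : ℂ)⁻¹ * R := by
    intro S1 S2 R h
    rw [← h]
    field_simp
  apply hS
  rw [← Finset.sum_sub_distrib]
  exact Finset.sum_congr rfl fun t _ => by rw [hmix1 t, hmix2 t]; ring1

lemma mixV_mixV₁ (x y : ∀ i, Fin (p i)) (t : Fin m → Bool) :
    mixV (mixV x y t) (mixV x y fun i => !t i) t = x := by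
  funext i
  simp only [mixV]
  rcases Bool.dichotomy (t i) with ht | ht <;> simp [ht]

lemma mixV_mixV₂ (x y : ∀ i, Fin (p i)) (t : Fin m → Bool) :
    mixV (mixV x y t) (mixV x y fun i => !t i) (fun i => !t i) = y := by
  funext i
  simp only [mixV]
  rcases Bool.dichotomy (t i) with ht | ht <;> simp [ht]

lemma adj_mix (P : ∀ i, SimpleGraph (Fin (p i))) (S : Finset (Fin m → Fin 3))
    {x y : ∀ i, Fin (p i)} (h : (graphProdFamily P S).Adj x y) (t : Fin m → Bool) :
    (graphProdFamily P S).Adj (mixV x y t) (mixV x y fun i => !t i) := by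
  obtain ⟨hne, c, hc, hrel⟩ := h
  refine ⟨?_, c, hc, fun i => ?_⟩
  · intro hEq
    apply hne
    funext i
    have h2 := congrFun hEq i
    simp only [mixV] at h2
    rcases Bool.dichotomy (t i) with ht | ht <;> simp [ht] at h2
    exacts [h2, h2.symm]
  · simp only [mixV]
    rcases Bool.dichotomy (t i) with ht | ht <;> simp [ht]
    exacts [hrel i, coordRel_symm _ _ (hrel i)]

lemma key3 (G : SimpleGraph (∀ i, Fin (p i))) (a b : ∀ i, Fin (p i)) :
    ∑ q ∈ Finset.univ.filter (fun q : (∀ i, Fin (p i)) × (∀ i, Fin (p i)) => G.Adj q.1 q.2),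
      (if a = q.1 then (1:ℂ) else 0) * ((if b = q.1 then 1 else 0) - (if b = q.2 then 1 else 0))
    = lapMat G a b := by
  rw [Finset.sum_filter, Fintype.sum_prod_type]
  have h1 : ∀ x : ∀ i, Fin (p i),
      (∑ y : ∀ i, Fin (p i), if G.Adj x y then
          (if a = x then (1:ℂ) else 0) * ((if b = x then 1 else 0) - (if b = y then 1 else 0))
        else 0)
      = if a = x then (∑ y : ∀ i, Fin (p i), if G.Adj x y then
          ((if b = x then (1:ℂ) else 0) - (if b = y then 1 else 0)) else 0) else 0 := by
    intro x
    by_cases hax : a = x <;> simp [hax]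
  simp only [h1]
  rw [Finset.sum_ite_eq Finset.univ a _]
  simp only [Finset.mem_univ, if_true]
  have h2 : ∀ y : ∀ i, Fin (p i),
      (if G.Adj a y then ((if b = a then (1:ℂ) else 0) - (if b = y then 1 else 0)) else 0)
      = (if b = a then (if G.Adj a y then (1:ℂ) else 0) else 0)
        - (if b = y then (if G.Adj a y then (1:ℂ) else 0) else 0) := by
    intro y
    split_ifs <;> ring
  simp only [h2]
  rw [Finset.sum_sub_distrib]
  rw [Finset.sum_ite_eq Finset.univ b (fun y => if G.Adj a y then (1:ℂ) else 0)]
  simp only [Finset.mem_univ, if_true]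
  have h3 : (∑ y : ∀ i, Fin (p i), if b = a then (if G.Adj a y then (1:ℂ) else 0) else 0)
      = if b = a then (∑ y : ∀ i, Fin (p i), if G.Adj a y then (1:ℂ) else 0) else 0 := by
    by_cases hba : b = a <;> simp [hba]
  rw [h3]
  unfold lapMat
  rw [Matrix.sub_apply, Matrix.diagonal_apply]
  have h4 : (if a = b then ∑ y, adjMatC G a y else 0) = if b = a then ∑ y, adjMatC G a y else 0 := by
    rcases em (a = b) with h | h
    · simp [h]
    · have h5 : ¬ b = a := fun hh => h hh.symm
      simp [h, h5]
  rw [h4]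
  rfl

lemma tensor_trace (ρ : ∀ i, Matrix (Fin (p i)) (Fin (p i)) ℂ) (h : ∀ i, (ρ i).trace = 1) :
    (tensorFamily ρ).trace = 1 := by
  unfold Matrix.trace tensorFamily
  simp only [Matrix.diag_apply, Matrix.of_apply]
  rw [← Fintype.prod_sum (fun i j => ρ i j j)]
  exact Finset.prod_eq_one fun i _ => h i

/-- The (unnormalized) coefficients of the separable decomposition. -/
noncomputable def cAbs (P : ∀ i, SimpleGraph (Fin (p i))) (S : Finset (Fin m → Fin 3))
    (q : ((∀ i, Fin (p i)) × (∀ i, Fin (p i))) × (Fin m → Bool)) : ℝ :=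
  if (graphProdFamily P S).Adj q.1.1 q.1.2 then coefR q.1.1 q.1.2 q.2 else 0

lemma cAbs_nonneg (P : ∀ i, SimpleGraph (Fin (p i))) (S : Finset (Fin m → Fin 3))
    (q : ((∀ i, Fin (p i)) × (∀ i, Fin (p i))) × (Fin m → Bool)) : 0 ≤ cAbs P S q := by
  unfold cAbs
  split_ifs
  · exact coefR_nonneg _ _ _
  · exact le_refl 0

/-- The main decomposition: the Laplacian of a graph product is a nonnegative
combination of tensor products of density matrices. -/
lemma decomp (P : ∀ i, SimpleGraph (Fin (p i))) (S : Finset (Fin m → Fin 3)) :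
    lapMat (graphProdFamily P S)
      = ∑ q : ((∀ i, Fin (p i)) × (∀ i, Fin (p i))) × (Fin m → Bool),
          (cAbs P S q : ℂ) • tensorFamily (rhoF q.1.1 q.1.2 q.2) := by
  classical
  set G := graphProdFamily P S with hG
  ext a b
  rw [Matrix.sum_apply]
  simp only [Matrix.smul_apply, smul_eq_mul]
  rw [Fintype.sum_prod_type]
  have step1 : ∀ e : (∀ i, Fin (p i)) × (∀ i, Fin (p i)),
      (∑ s : Fin m → Bool, ((cAbs P S (e, s) : ℝ) : ℂ) * tensorFamily (rhoF e.1 e.2 s) a b)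
      = if G.Adj e.1 e.2 then (2 ^ m : ℂ)⁻¹ * ∑ t : Fin m → Bool,
          (if a = mixV e.1 e.2 t then (1:ℂ) else 0) *
            ((if b = mixV e.1 e.2 t then 1 else 0) -
              (if b = mixV e.1 e.2 (fun i => !t i) then 1 else 0)) else 0 := by
    intro e
    by_cases h : G.Adj e.1 e.2
    · simp only [cAbs, ← hG, h, if_true]
      exact key1 e.1 e.2 a b
    · simp [cAbs, ← hG, h]
  simp only [step1]
  rw [← Finset.sum_filter]
  rw [← Finset.mul_sum]
  have step2 : (∑ e ∈ Finset.univ.filter (fun e : (∀ i, Fin (p i)) × (∀ i, Fin (p i)) =>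
        G.Adj e.1 e.2), ∑ t : Fin m → Bool,
        (if a = mixV e.1 e.2 t then (1:ℂ) else 0) *
          ((if b = mixV e.1 e.2 t then 1 else 0) -
            (if b = mixV e.1 e.2 (fun i => !t i) then 1 else 0)))
      = (2 ^ m : ℂ) * ∑ e ∈ Finset.univ.filter (fun e : (∀ i, Fin (p i)) × (∀ i, Fin (p i)) =>
          G.Adj e.1 e.2),
          (if a = e.1 then (1:ℂ) else 0) *
            ((if b = e.1 then 1 else 0) - (if b = e.2 then 1 else 0)) := by
    set E := Finset.univ.filter (fun e : (∀ i, Fin (p i)) × (∀ i, Fin (p i)) =>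
        G.Adj e.1 e.2) with hE
    have hmemE : ∀ e : (∀ i, Fin (p i)) × (∀ i, Fin (p i)), e ∈ E ↔ G.Adj e.1 e.2 := by
      intro e; rw [hE, Finset.mem_filter]; simp
    calc (∑ e ∈ E, ∑ t : Fin m → Bool,
            (if a = mixV e.1 e.2 t then (1:ℂ) else 0) *
              ((if b = mixV e.1 e.2 t then 1 else 0) -
                (if b = mixV e.1 e.2 (fun i => !t i) then 1 else 0)))
        = ∑ q ∈ E ×ˢ (Finset.univ : Finset (Fin m → Bool)),
            (if a = mixV q.1.1 q.1.2 q.2 then (1:ℂ) else 0) *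
              ((if b = mixV q.1.1 q.1.2 q.2 then 1 else 0) -
                (if b = mixV q.1.1 q.1.2 (fun i => !q.2 i) then 1 else 0)) := by
          rw [Finset.sum_product]
      _ = ∑ q ∈ E ×ˢ (Finset.univ : Finset (Fin m → Bool)),
            (if a = q.1.1 then (1:ℂ) else 0) *
              ((if b = q.1.1 then 1 else 0) - (if b = q.1.2 then 1 else 0)) := by
          refine Finset.sum_nbij'
            (fun q => ((mixV q.1.1 q.1.2 q.2, mixV q.1.1 q.1.2 fun i => !q.2 i), q.2))
            (fun q => ((mixV q.1.1 q.1.2 q.2, mixV q.1.1 q.1.2 fun i => !q.2 i), q.2))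
            ?_ ?_ ?_ ?_ ?_
          · intro q hq
            rw [Finset.mem_product] at hq ⊢
            refine ⟨?_, Finset.mem_univ _⟩
            rw [hmemE] at hq ⊢
            exact adj_mix P S (hG ▸ hq.1) q.2
          · intro q hq
            rw [Finset.mem_product] at hq ⊢
            refine ⟨?_, Finset.mem_univ _⟩
            rw [hmemE] at hq ⊢
            exact adj_mix P S (hG ▸ hq.1) q.2
          · intro q _
            refine Prod.ext (Prod.ext ?_ ?_) rfl
            · exact mixV_mixV₁ q.1.1 q.1.2 q.2
            · exact mixV_mixV₂ q.1.1 q.1.2 q.2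
          · intro q _
            refine Prod.ext (Prod.ext ?_ ?_) rfl
            · exact mixV_mixV₁ q.1.1 q.1.2 q.2
            · exact mixV_mixV₂ q.1.1 q.1.2 q.2
          · intro q _
            rfl
      _ = ∑ e ∈ E, ∑ _t : Fin m → Bool,
            (if a = e.1 then (1:ℂ) else 0) *
              ((if b = e.1 then 1 else 0) - (if b = e.2 then 1 else 0)) := by
          rw [Finset.sum_product]
      _ = (2 ^ m : ℂ) * ∑ e ∈ E,
            (if a = e.1 then (1:ℂ) else 0) *
              ((if b = e.1 then 1 else 0) - (if b = e.2 then 1 else 0)) := by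
          rw [Finset.mul_sum]
          refine Finset.sum_congr rfl fun e _ => ?_
          rw [Finset.sum_const, Finset.card_univ]
          have hcard : Fintype.card (Fin m → Bool) = 2 ^ m := by
            simp [Fintype.card_fun]
          rw [hcard, nsmul_eq_mul]
          push_cast
          ring1
  rw [step2, ← mul_assoc, inv_mul_cancel₀ (by positivity : (2 ^ m : ℂ) ≠ 0), one_mul]
  exact (key3 G a b).symm

end Stmt9Aux

/-- the normalized Laplacian matrix of any graph product of graphs
P₁, …, P_m (with nonzero trace) is a separable density matrix in
ℂ^{p_1} × ⋯ × ℂ^{p_m}. -/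
theorem stmt_9 {m : ℕ} {p : Fin m → ℕ} (P : ∀ i, SimpleGraph (Fin (p i)))
    (S : Finset (Fin m → Fin 3)) (hS : (fun _ => (1 : Fin 3)) ∉ S)
    (A : Matrix (∀ i, Fin (p i)) (∀ i, Fin (p i)) ℂ)
    (hA : A = lapMat (graphProdFamily P S))
    (htr : A.trace ≠ 0) :
    SepDensityFamily (A.trace⁻¹ • A) := by
  classical
  have hdecomp : A = ∑ q : ((∀ i, Fin (p i)) × (∀ i, Fin (p i))) × (Fin m → Bool),
      (Stmt9Aux.cAbs P S q : ℂ) • tensorFamily (Stmt9Aux.rhoF q.1.1 q.1.2 q.2) := by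
    rw [hA]; exact Stmt9Aux.decomp P S
  have hTtr : ∀ q : ((∀ i, Fin (p i)) × (∀ i, Fin (p i))) × (Fin m → Bool),
      (tensorFamily (Stmt9Aux.rhoF q.1.1 q.1.2 q.2)).trace = 1 :=
    fun q => Stmt9Aux.tensor_trace _ (fun i => Stmt9Aux.rho1_trace _ _ _)
  set R : ℝ := ∑ q : ((∀ i, Fin (p i)) × (∀ i, Fin (p i))) × (Fin m → Bool),
      Stmt9Aux.cAbs P S q with hR
  have htr2 : A.trace = (R : ℂ) := by
    rw [hdecomp, Matrix.trace_sum]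
    rw [hR]
    push_cast
    refine Finset.sum_congr rfl fun q _ => ?_
    rw [Matrix.trace_smul, hTtr q, smul_eq_mul, mul_one]
  have hRnn : 0 ≤ R := Finset.sum_nonneg fun q _ => Stmt9Aux.cAbs_nonneg P S q
  have hRne : R ≠ 0 := by
    intro h0
    apply htr
    rw [htr2, h0, Complex.ofReal_zero]
  set eqv := Fintype.equivFin (((∀ i, Fin (p i)) × (∀ i, Fin (p i))) × (Fin m → Bool)) with heqv
  refine ⟨Fintype.card (((∀ i, Fin (p i)) × (∀ i, Fin (p i))) × (Fin m → Bool)),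
    fun j => Stmt9Aux.cAbs P S (eqv.symm j) / R,
    fun j => Stmt9Aux.rhoF (eqv.symm j).1.1 (eqv.symm j).1.2 (eqv.symm j).2,
    ?_, ?_, ?_, ?_⟩
  · intro t
    exact div_nonneg (Stmt9Aux.cAbs_nonneg P S _) hRnn
  · rw [Equiv.sum_comp eqv.symm (fun q => Stmt9Aux.cAbs P S q / R), ← Finset.sum_div,
      ← hR, div_self hRne]
  · intro t i
    exact ⟨Stmt9Aux.rho1_posSemidef _ _ _, Stmt9Aux.rho1_trace _ _ _⟩
  · rw [htr2, hdecomp, Finset.smul_sum]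
    rw [Equiv.sum_comp eqv.symm (fun q => ((Stmt9Aux.cAbs P S q / R : ℝ) : ℂ) •
        tensorFamily (Stmt9Aux.rhoF q.1.1 q.1.2 q.2))]
    refine Finset.sum_congr rfl fun q _ => ?_
    rw [smul_smul]
    congr 1
    push_cast
    field_simp
end

section
/- Let n = p_1 p_2 with p_1, p_2 ≥ 2, and let 1 ≤ r < p_1 with r not divisible by p_2. Then for every vertex labeling (bijection V(K_{r,n-r}) → {1,…,p_1}×{1,…,p_2}), there exists a vertex whose degree in the complete bipartite graph K_{r,n-r} differs from its degree in the partial transpose graph; consequently the normalized Laplacian of K_{r,n-r} is entangled in C^{p_1} × C^{p_2} under every vertex labeling. -/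
open Matrix Finset
open scoped Kronecker Classical ComplexOrder

/-- The partial transpose graph: {(u,v),(w,y)} is an edge iff {(u,y),(w,v)} is an
edge of the original graph. -/
def partialTranspose {α β : Type*} (G : SimpleGraph (α × β)) : SimpleGraph (α × β) where
  Adj x y := G.Adj (x.1, y.2) (y.1, x.2)
  symm := ⟨fun x y h => G.symm.symm _ _ h⟩
  loopless := ⟨fun x h => G.loopless.irrefl (x.1, x.2) h⟩

/-- The degree of a vertex: the number of neighbors. -/
noncomputable def natDeg {γ : Type*} [Fintype γ] (G : SimpleGraph γ) (x : γ) : ℕ :=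
  (Finset.univ.filter fun y => G.Adj x y).card

/-- The complete bipartite graph K_{r,n-r} on Fin n, with parts {i : i < r} and
{i : r ≤ i}. -/
def Kbip (n r : ℕ) : SimpleGraph (Fin n) :=
  SimpleGraph.fromRel fun i j => i.val < r ∧ ¬ j.val < r

/-- for n = p₁p₂ with p₁, p₂ ≥ 2, 1 ≤ r < p₁ and p₂ ∤ r, under every
vertex labeling of K_{r,n-r} by {1,…,p₁} × {1,…,p₂} some vertex has different degrees
in K_{r,n-r} and in its partial transpose graph (hence the normalized Laplacian is
entangled in ℂ^{p₁} × ℂ^{p₂} for every vertex labeling). -/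
theorem stmt_14 (p₁ p₂ r : ℕ) (hp₁ : 2 ≤ p₁) (hp₂ : 2 ≤ p₂)
    (hr₁ : 1 ≤ r) (hr₂ : r < p₁) (hnd : ¬ p₂ ∣ r) :
    ∀ f : Fin (p₁ * p₂) ≃ Fin p₁ × Fin p₂,
      ∃ x, natDeg (partialTranspose ((Kbip (p₁ * p₂) r).map f.toEmbedding)) x ≠
        natDeg ((Kbip (p₁ * p₂) r).map f.toEmbedding) x := by
  intro f
  by_contra hcon
  push_neg at hcon
  have hrn : r ≤ p₁ * p₂ := le_trans (le_of_lt hr₂) (Nat.le_mul_of_pos_right _ (by omega))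
  -- adjacency of mapped graph
  have hmap : ∀ x y, ((Kbip (p₁*p₂) r).map f.toEmbedding).Adj x y ↔
      (Kbip (p₁*p₂) r).Adj (f.symm x) (f.symm y) := by
    intro x y
    simp only [SimpleGraph.map_adj, Equiv.coe_toEmbedding]
    constructor
    · rintro ⟨-, a, b, hab, ha, hb⟩
      subst ha; subst hb; simpa using hab
    · intro hab; exact ⟨by rintro rfl; exact hab.ne rfl, f.symm x, f.symm y, hab, by simp, by simp⟩
  -- Kbip adjacency from a right-part vertex
  have hadj : ∀ i j : Fin (p₁*p₂), ¬ (i:ℕ) < r → ((Kbip (p₁*p₂) r).Adj i j ↔ (j:ℕ) < r) := by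
    intro i j hi
    simp only [Kbip, SimpleGraph.fromRel_adj, Ne, Fin.ext_iff]
    omega
  -- card of the left part
  have hrn' : r < p₁ * p₂ := lt_of_lt_of_le hr₂ (Nat.le_mul_of_pos_right _ (by omega))
  have hcard : (univ.filter (fun j : Fin (p₁*p₂) => (j:ℕ) < r)).card = r := by
    have : (univ.filter (fun j : Fin (p₁*p₂) => (j:ℕ) < r)) = Finset.Iio ⟨r, hrn'⟩ := by
      ext i; simp [Fin.lt_def]
    rw [this, Fin.card_Iio]
  -- there is a row with no left-part labels
  obtain ⟨u₀, hu₀⟩ : ∃ u₀ : Fin p₁, ∀ t : Fin p₂, ¬ ((f.symm (u₀, t)) : ℕ) < r := by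
    by_contra hc
    push_neg at hc
    choose t ht using hc
    have hle : p₁ ≤ (univ.filter (fun j : Fin (p₁*p₂) => (j:ℕ) < r)).card := by
      have := Finset.card_le_card_of_injOn (s := (univ : Finset (Fin p₁)))
        (t := univ.filter (fun j : Fin (p₁*p₂) => (j:ℕ) < r))
        (fun u : Fin p₁ => f.symm (u, t u))
        (fun u _ => by simp [ht u])
        (fun a _ b _ hab => by
          have := congrArg (fun j => (f j).1) hab
          simpa using this)
      simpa using this
    omega
  set v : Fin p₂ := ⟨0, by omega⟩
  -- degree in mapped graph
  have key : (univ.filter fun y : Fin p₁ × Fin p₂ =>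
      ((Kbip (p₁*p₂) r).map f.toEmbedding).Adj (u₀, v) y).card
      = (univ.filter (fun j : Fin (p₁*p₂) => (j:ℕ) < r)).card := by
    apply Finset.card_bij' (fun y _ => f.symm y) (fun j _ => f j)
    · intro y hy
      simp only [mem_filter, mem_univ, true_and] at hy ⊢
      rw [hmap] at hy
      exact (hadj _ _ (hu₀ v)).mp hy
    · intro j hj
      simp only [mem_filter, mem_univ, true_and] at hj ⊢
      rw [hmap]
      simp only [Equiv.symm_apply_apply]
      exact (hadj _ _ (hu₀ v)).mpr hj
    · intro y _; simp
    · intro j _; simp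
  have hdegG : natDeg ((Kbip (p₁*p₂) r).map f.toEmbedding) (u₀, v) = r := by
    unfold natDeg
    convert key.trans hcard using 2
    congr!
  -- degree in partial transpose
  have hsplit : (univ.filter fun y : Fin p₁ × Fin p₂ => ((f.symm (y.1, v)) : ℕ) < r)
      = (univ.filter fun y1 : Fin p₁ => ((f.symm (y1, v)) : ℕ) < r) ×ˢ (univ : Finset (Fin p₂)) := by
    ext y
    simp [Finset.mem_product]
  have hdegPT : natDeg (partialTranspose ((Kbip (p₁*p₂) r).map f.toEmbedding)) (u₀, v)
      = (univ.filter fun y1 : Fin p₁ => ((f.symm (y1, v)) : ℕ) < r).card * p₂ := by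
    unfold natDeg
    have : ∀ y : Fin p₁ × Fin p₂,
        (partialTranspose ((Kbip (p₁*p₂) r).map f.toEmbedding)).Adj (u₀, v) y ↔
        ((f.symm (y.1, v)) : ℕ) < r := by
      intro y
      show ((Kbip (p₁*p₂) r).map f.toEmbedding).Adj (u₀, y.2) (y.1, v) ↔ _
      rw [hmap]
      exact hadj _ _ (hu₀ y.2)
    rw [Finset.filter_congr (fun y _ => by rw [this y]), hsplit, Finset.card_product,
      Finset.card_univ, Fintype.card_fin]
  have := hcon (u₀, v)
  rw [hdegG, hdegPT] at this
  exact hnd (this ▸ dvd_mul_left p₂ _)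
end

section
/- Let n = p_1 p_2 with p_1, p_2 ≥ 2, and let G be a nontrivial graph on n vertices whose minimum degree d satisfies d < p_2 − 1. Then there exists a vertex labeling of G by {1,…,p_1}×{1,…,p_2} such that some vertex has strictly larger degree in the partial transpose graph G^{pT} than in G (hence the normalized Laplacian is entangled in C^{p_1} × C^{p_2} under that labeling). -/
open Matrix Finset
open scoped Kronecker Classical ComplexOrder

lemma natDeg_map_apply {γ δ : Type*} [Fintype γ] [Fintype δ] (G : SimpleGraph γ)
    (f : γ ≃ δ) (x : γ) : natDeg (G.map f.toEmbedding) (f x) = natDeg G x := by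
  classical
  unfold natDeg
  apply Finset.card_bij (fun z _ => f.symm z)
  · intro z hz
    simp only [Finset.mem_filter, Finset.mem_univ, true_and] at hz ⊢
    rw [← f.apply_symm_apply z] at hz
    exact (SimpleGraph.map_adj_apply (f := f.toEmbedding)).1 hz
  · intro z₁ h₁ z₂ h₂ h
    exact f.symm.injective h
  · intro y hy
    simp only [Finset.mem_filter, Finset.mem_univ, true_and] at hy ⊢
    exact ⟨f y, (SimpleGraph.map_adj_apply (f := f.toEmbedding)).2 hy, Equiv.symm_apply_apply f y⟩

/-- for n = p₁p₂ with p₁, p₂ ≥ 2 and G a nontrivial graph on n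
vertices whose minimum degree d satisfies d < p₂ − 1 (i.e. some vertex w has
degree d with d + 1 < p₂), there is a vertex labeling under which some vertex has
strictly larger degree in the partial transpose graph than in G (hence the
normalized Laplacian is entangled in ℂ^{p₁} × ℂ^{p₂} for that labeling). -/
theorem stmt_16 (p₁ p₂ : ℕ) (hp₁ : 2 ≤ p₁) (hp₂ : 2 ≤ p₂)
    (G : SimpleGraph (Fin (p₁ * p₂))) (hnt : G ≠ ⊥)
    (hmin : ∃ w, (∀ x, natDeg G w ≤ natDeg G x) ∧ natDeg G w + 1 < p₂) :
    ∃ f : Fin (p₁ * p₂) ≃ Fin p₁ × Fin p₂,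
      ∃ x, natDeg (G.map f.toEmbedding) x <
        natDeg (partialTranspose (G.map f.toEmbedding)) x := by
  classical
  haveI : NeZero p₁ := ⟨by omega⟩
  haveI : NeZero p₂ := ⟨by omega⟩
  obtain ⟨w, hw, hwlt⟩ := hmin
  set d : ℕ := natDeg G w with hd
  set Nw : Finset (Fin (p₁ * p₂)) := Finset.univ.filter (fun y => G.Adj w y) with hNwdef
  have hNwcard : Nw.card = d := rfl
  have hmemNw : ∀ y, y ∈ Nw ↔ G.Adj w y := by
    intro y; simp [hNwdef]
  -- there exists an edge avoiding w
  obtain ⟨a, b, hab, haw, hbw⟩ : ∃ a b, G.Adj a b ∧ a ≠ w ∧ b ≠ w := by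
    by_contra hcon
    push_neg at hcon
    -- every edge has an endpoint equal to w
    obtain ⟨x, y, hxy⟩ : ∃ x y, G.Adj x y := by
      by_contra h
      push_neg at h
      exact hnt (by ext u v; simp [h u v])
    obtain ⟨b0, hb0⟩ : ∃ b0, G.Adj w b0 := by
      by_cases hx : x = w
      · exact ⟨y, hx ▸ hxy⟩
      · have := hcon x y hxy hx
        exact ⟨x, this ▸ hxy.symm⟩
    have hb0w : b0 ≠ w := hb0.ne'
    have hd1 : 1 ≤ d := by
      have : b0 ∈ Nw := (hmemNw b0).2 hb0
      have := Finset.card_pos.2 ⟨b0, this⟩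
      omega
    have hb0deg : natDeg G b0 ≤ 1 := by
      have hsub : (Finset.univ.filter fun z => G.Adj b0 z) ⊆ {w} := by
        intro z hz
        simp only [Finset.mem_filter, Finset.mem_univ, true_and] at hz
        simp [hcon b0 z hz hb0w]
      calc natDeg G b0 ≤ ({w} : Finset _).card := Finset.card_le_card hsub
        _ = 1 := by simp
    have hdeq : d = 1 := le_antisymm (le_trans (hw b0) hb0deg) hd1
    -- find a third vertex
    have hcard4 : 4 ≤ p₁ * p₂ := le_trans (by norm_num) (Nat.mul_le_mul hp₁ hp₂)
    obtain ⟨c, hc⟩ : ∃ c, c ∉ ({w, b0} : Finset (Fin (p₁ * p₂))) := by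
      by_contra h
      push_neg at h
      have := Finset.card_le_card (fun z _ => h z : (Finset.univ : Finset (Fin (p₁*p₂))) ⊆ {w, b0})
      simp only [Finset.card_univ, Fintype.card_fin] at this
      have h2 : ({w, b0} : Finset (Fin (p₁ * p₂))).card ≤ 2 :=
        le_trans (Finset.card_insert_le _ _) (by simp)
      omega
    simp only [Finset.mem_insert, Finset.mem_singleton, not_or] at hc
    obtain ⟨hcw, hcb0⟩ := hc
    have hcdeg : 1 ≤ natDeg G c := hdeq ▸ hw c
    obtain ⟨e, he⟩ : ∃ e, G.Adj c e := by
      by_contra h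
      push_neg at h
      have h0 : natDeg G c = 0 := by
        rw [natDeg]
        simp [h]
      omega
    have hew : e = w := hcon c e he hcw
    have hcNw : c ∈ Nw := (hmemNw c).2 (hew ▸ he.symm)
    have hb0Nw : b0 ∈ Nw := (hmemNw b0).2 hb0
    have : 2 ≤ Nw.card := by
      have : ({c, b0} : Finset _) ⊆ Nw := by
        intro z hz
        simp only [Finset.mem_insert, Finset.mem_singleton] at hz
        rcases hz with rfl | rfl <;> assumption
      calc 2 = ({c, b0} : Finset (Fin (p₁*p₂))).card := by rw [Finset.card_insert_of_notMem (by simp [hcb0]), Finset.card_singleton]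
        _ ≤ Nw.card := Finset.card_le_card this
    omega
  have hba : b ≠ a := hab.ne'
  -- the set S of vertices to place in row 0 (besides w)
  set S : Finset (Fin (p₁ * p₂)) := insert a (Nw.erase b) with hSdef
  have hwS : w ∉ S := by
    simp only [hSdef, Finset.mem_insert, Finset.mem_erase, not_or]
    refine ⟨fun h => haw h.symm, fun h => ?_⟩
    have := (hmemNw w).1 h.2
    exact G.loopless.irrefl w this
  have hbS : b ∉ S := by
    simp [hSdef, hba, Finset.mem_erase]
  have hScard : S.card ≤ d + 1 := by
    calc S.card ≤ (Nw.erase b).card + 1 := Finset.card_insert_le _ _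
      _ ≤ Nw.card + 1 := by have := Finset.card_erase_le (s := Nw) (a := b); omega
      _ = d + 1 := by rw [hNwcard]
  -- an injection from S into the nonzero elements of Fin p₂
  have hp₂pos : 0 < p₂ := by omega
  have hcard2 : Fintype.card ↥S ≤ Fintype.card ↥((Finset.univ : Finset (Fin p₂)).erase (0 : Fin p₂)) := by
    rw [Fintype.card_coe, Fintype.card_coe, Finset.card_erase_of_mem (Finset.mem_univ _),
      Finset.card_univ, Fintype.card_fin]
    omega
  obtain ⟨ι⟩ := Function.Embedding.nonempty_of_card_le hcard2
  -- the partial labeling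
  set F : Fin (p₁ * p₂) → Fin p₁ × Fin p₂ := fun x =>
    if x = w then ((0 : Fin p₁), (0 : Fin p₂))
    else if x = b then ((⟨1, by omega⟩ : Fin p₁), (0 : Fin p₂))
    else if h : x ∈ S then ((0 : Fin p₁), (ι ⟨x, h⟩ : Fin p₂))
    else ((0 : Fin p₁), (0 : Fin p₂)) with hFdef
  have hFw : F w = ((0 : Fin p₁), (0 : Fin p₂)) := by simp [hFdef]
  have hFb : F b = ((⟨1, by omega⟩ : Fin p₁), (0 : Fin p₂)) := by simp [hFdef, hbw]
  have hFS : ∀ s (hs : s ∈ S), F s = ((0 : Fin p₁), (ι ⟨s, hs⟩ : Fin p₂)) := by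
    intro s hs
    have hsw : s ≠ w := fun h => hwS (h ▸ hs)
    have hsb : s ≠ b := fun h => hbS (h ▸ hs)
    simp [hFdef, hsw, hsb, hs]
  have hιne : ∀ (s : ↥S), (ι s : Fin p₂) ≠ 0 := by
    intro s
    have := (ι s).2
    simp only [Finset.mem_erase] at this
    exact this.1
  have h01 : (0 : Fin p₁) ≠ (⟨1, by omega⟩ : Fin p₁) := by
    intro h
    have := congrArg Fin.val h
    simp at this
  have hpairne : ∀ (y2 z2 : Fin p₂), ((0 : Fin p₁), y2) ≠ ((⟨1, by omega⟩ : Fin p₁), z2) := by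
    intro y2 z2 h
    rw [Prod.mk.injEq] at h
    exact h01 h.1
  -- T: the set where F is prescribed
  set T : Finset (Fin (p₁ * p₂)) := insert w (insert b S) with hTdef
  have hinj : Set.InjOn F T := by
    intro x hx y hy hxy
    simp only [hTdef, Finset.coe_insert, Set.mem_insert_iff, Finset.mem_coe] at hx hy
    rcases hx with rfl | rfl | hx <;> rcases hy with rfl | rfl | hy
    · rfl
    · rw [hFw, hFb] at hxy; exact absurd hxy (hpairne _ _)
    · rw [hFw, hFS y hy, Prod.mk.injEq] at hxy
      exact absurd hxy.2.symm (hιne ⟨y, hy⟩)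
    · rw [hFw, hFb] at hxy; exact absurd hxy.symm (hpairne _ _)
    · rfl
    · rw [hFb, hFS y hy] at hxy
      exact absurd hxy.symm (hpairne _ _)
    · rw [hFw, hFS x hx, Prod.mk.injEq] at hxy
      exact absurd hxy.2 (hιne ⟨x, hx⟩)
    · rw [hFb, hFS x hx] at hxy
      exact absurd hxy (hpairne _ _)
    · rw [hFS x hx, hFS y hy, Prod.mk.injEq] at hxy
      have : ι ⟨x, hx⟩ = ι ⟨y, hy⟩ := Subtype.ext hxy.2
      exact congrArg Subtype.val (ι.injective this)
  -- extend to an equivalence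
  have hcardeq : Fintype.card (Fin (p₁ * p₂)) = (Finset.univ : Finset (Fin p₁ × Fin p₂)).card := by
    simp [Finset.card_univ]
  have hTimg : T.image F ⊆ (Finset.univ : Finset (Fin p₁ × Fin p₂)) := Finset.subset_univ _
  obtain ⟨g, hg⟩ := Finset.exists_equiv_extend_of_card_eq hcardeq hTimg hinj
  set f : Fin (p₁ * p₂) ≃ Fin p₁ × Fin p₂ :=
    g.trans (Equiv.subtypeUnivEquiv (fun x => Finset.mem_univ x)) with hfdef
  have hfF : ∀ i ∈ T, f i = F i := by
    intro i hi
    have := hg i hi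
    simp only [hfdef, Equiv.trans_apply, Equiv.subtypeUnivEquiv_apply]
    exact this
  have hwT : w ∈ T := by simp [hTdef]
  have hbT : b ∈ T := by simp [hTdef]
  have hST : ∀ s ∈ S, s ∈ T := by intro s hs; simp [hTdef, hs]
  have haS : a ∈ S := by simp [hSdef]
  have hfw : f w = ((0 : Fin p₁), (0 : Fin p₂)) := by rw [hfF w hwT, hFw]
  have hfb : f b = ((⟨1, by omega⟩ : Fin p₁), (0 : Fin p₂)) := by rw [hfF b hbT, hFb]
  have hfS : ∀ s ∈ S, (f s).1 = (0 : Fin p₁) ∧ (f s).2 ≠ (0 : Fin p₂) := by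
    intro s hs
    rw [hfF s (hST s hs), hFS s hs]
    exact ⟨rfl, hιne ⟨s, hs⟩⟩
  refine ⟨f, ((0 : Fin p₁), (0 : Fin p₂)), ?_⟩
  set G' := G.map f.toEmbedding with hG'def
  have hadj : ∀ u v, G'.Adj (f u) (f v) ↔ G.Adj u v := by
    intro u v
    exact SimpleGraph.map_adj_apply
  -- degree of the image point in G' equals d
  have hdeg0 : natDeg G' ((0 : Fin p₁), (0 : Fin p₂)) = d := by
    rw [← hfw, hG'def, natDeg_map_apply]
  -- the witness set
  set W2 : Finset (Fin p₁ × Fin p₂) :=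
    if b ∈ Nw then {((⟨1, by omega⟩ : Fin p₁), (f a).2), ((⟨1, by omega⟩ : Fin p₁), (0 : Fin p₂))}
    else {((⟨1, by omega⟩ : Fin p₁), (f a).2)} with hW2def
  set W : Finset (Fin p₁ × Fin p₂) := (Nw.erase b).image f ∪ W2 with hWdef
  have hEsub : Nw.erase b ⊆ S := by
    intro z hz
    exact Finset.mem_insert_of_mem hz
  have hWcard : W.card = d + 1 := by
    have hdisj : Disjoint ((Nw.erase b).image f) W2 := by
      rw [Finset.disjoint_left]
      intro z hz hz2
      obtain ⟨s, hs, rfl⟩ := Finset.mem_image.1 hz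
      have h1 : (f s).1 = 0 := (hfS s (hEsub hs)).1
      have hfs_eq : f s = ((0 : Fin p₁), (f s).2) := by
        rw [← h1]
      rw [hW2def] at hz2
      by_cases hb : b ∈ Nw
      · rw [if_pos hb] at hz2
        simp only [Finset.mem_insert, Finset.mem_singleton] at hz2
        rcases hz2 with h | h <;> rw [hfs_eq] at h <;> exact hpairne _ _ h
      · rw [if_neg hb] at hz2
        simp only [Finset.mem_singleton] at hz2
        rw [hfs_eq] at hz2
        exact hpairne _ _ hz2
    rw [hWdef, Finset.card_union_of_disjoint hdisj,
      Finset.card_image_of_injective _ f.injective]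
    have hfa2 : (f a).2 ≠ 0 := (hfS a haS).2
    by_cases hb : b ∈ Nw
    · have hW2card : W2.card = 2 := by
        rw [hW2def, if_pos hb]
        rw [Finset.card_insert_of_notMem (by simp [hfa2]), Finset.card_singleton]
      rw [hW2card, Finset.card_erase_of_mem hb, hNwcard]
      have : 1 ≤ d := by
        have := Finset.card_pos.2 ⟨b, hb⟩
        omega
      omega
    · have hW2card : W2.card = 1 := by rw [hW2def, if_neg hb, Finset.card_singleton]
      rw [hW2card, Finset.erase_eq_of_notMem hb, hNwcard]
  have hWsub : W ⊆ Finset.univ.filter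
      (fun z => (partialTranspose G').Adj ((0 : Fin p₁), (0 : Fin p₂)) z) := by
    intro z hz
    simp only [Finset.mem_filter, Finset.mem_univ, true_and]
    rw [hWdef, Finset.mem_union] at hz
    rcases hz with hz | hz
    · obtain ⟨s, hs, rfl⟩ := Finset.mem_image.1 hz
      have h1 : (f s).1 = 0 := (hfS s (hEsub hs)).1
      show G'.Adj ((0 : Fin p₁), (f s).2) ((f s).1, (0 : Fin p₂))
      have e1 : ((0 : Fin p₁), (f s).2) = f s := by
        rw [← h1]
      have e2 : ((f s).1, (0 : Fin p₂)) = f w := by rw [h1, hfw]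
      rw [e1, e2, hadj]
      have := (hmemNw s).1 (Finset.mem_of_mem_erase hs)
      exact this.symm
    · rw [hW2def] at hz
      by_cases hb : b ∈ Nw
      · rw [if_pos hb] at hz
        simp only [Finset.mem_insert, Finset.mem_singleton] at hz
        rcases hz with rfl | rfl
        · show G'.Adj ((0 : Fin p₁), (f a).2) ((⟨1, by omega⟩ : Fin p₁), (0 : Fin p₂))
          have e1 : ((0 : Fin p₁), (f a).2) = f a := by rw [← (hfS a haS).1]
          rw [e1, ← hfb, hadj]
          exact hab
        · show G'.Adj ((0 : Fin p₁), (0 : Fin p₂)) ((⟨1, by omega⟩ : Fin p₁), (0 : Fin p₂))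
          rw [← hfw, ← hfb, hadj]
          exact (hmemNw b).1 hb
      · rw [if_neg hb] at hz
        simp only [Finset.mem_singleton] at hz
        subst hz
        show G'.Adj ((0 : Fin p₁), (f a).2) ((⟨1, by omega⟩ : Fin p₁), (0 : Fin p₂))
        have e1 : ((0 : Fin p₁), (f a).2) = f a := by rw [← (hfS a haS).1]
        rw [e1, ← hfb, hadj]
        exact hab
  have hlb : d + 1 ≤ natDeg (partialTranspose G') ((0 : Fin p₁), (0 : Fin p₂)) := by
    rw [← hWcard]
    exact Finset.card_le_card hWsub
  rw [hdeg0]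
  omega
end

section
/- Let n = p_1 p_2 > 4 with p_1, p_2 ≥ 2, and let G be a nontrivial graph on n vertices with minimum degree d < p_1 + p_2 − 2 (for the factor ordering p_1 ≤ p_2, with p_2 > 2). Then there exists a vertex labeling of G by {1,…,p_1}×{1,…,p_2} under which some vertex has strictly larger degree in G^{pT} than in G, hence the normalized Laplacian of G is entangled in C^{p_1} × C^{p_2} for that labeling. -/
set_option maxHeartbeats 1000000


open Matrix Finset
open scoped Kronecker Classical ComplexOrder

lemma exists_equiv_extend {α β : Type*} [Fintype α] [Fintype β]
    (h : Fintype.card α = Fintype.card β) (S : Finset α) (g : α → β)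
    (hg : Set.InjOn g ↑S) : ∃ f : α ≃ β, ∀ x ∈ S, f x = g x := by
  classical
  set t : Set β := g '' ↑S with ht
  have hbij : Set.BijOn g ↑S t := ⟨Set.mapsTo_image _ _, hg, Set.surjOn_image _ _⟩
  let e₁ : ↥(↑S : Set α) ≃ ↥t := hbij.equiv g
  have h1 : Fintype.card ↥(↑S : Set α) = Fintype.card ↥t := Fintype.card_congr e₁
  have hcard : Fintype.card ↥((↑S : Set α)ᶜ) = Fintype.card ↥(tᶜ) := by
    rw [Fintype.card_compl_set, Fintype.card_compl_set, h, h1]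
  let e₂ := Fintype.equivOfCardEq hcard
  refine ⟨(Equiv.Set.sumCompl (↑S : Set α)).symm.trans ((e₁.sumCongr e₂).trans
    (Equiv.Set.sumCompl t)), ?_⟩
  intro x hx
  have h2 : ∀ inst, (@Equiv.Set.sumCompl α (↑S : Set α) inst).symm x = Sum.inl ⟨x, hx⟩ := by
    intro inst
    exact @Equiv.Set.sumCompl_symm_apply_of_mem α (↑S) inst x (by simpa using hx)
  simp only [Equiv.trans_apply, h2]
  simp [e₁, Set.BijOn.equiv, Equiv.ofBijective]

lemma natDeg_map_equiv {α β : Type*} [Fintype α] [Fintype β] (G : SimpleGraph α)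
    (f : α ≃ β) (x : α) : natDeg (G.map f.toEmbedding) (f x) = natDeg G x := by
  classical
  unfold natDeg
  apply Finset.card_bij' (fun y _ => f.symm y) (fun y _ => f y)
  · intro a ha
    simp only [mem_filter, mem_univ, true_and] at ha ⊢
    obtain ⟨_, u, v, huv, hu, hv⟩ := ha
    have : u = x := f.injective hu
    subst this
    rw [← hv]
    simpa using huv
  · intro a ha
    simp only [mem_filter, mem_univ, true_and] at ha ⊢
    exact ⟨f.injective.ne ha.ne, x, a, ha, rfl, rfl⟩
  · intros; simp
  · intros; simp

lemma exists_good_edge {V : Type*} [Fintype V] [DecidableEq V] (G : SimpleGraph V) (w : V)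
    (hw : ∀ x, natDeg G w ≤ natDeg G x) (hnt : G ≠ ⊥)
    (hcard : natDeg G w + 1 < Fintype.card V) (m : ℕ) (hm : 3 ≤ m)
    (hdm : natDeg G w + 1 ≤ m) :
    ∃ u v, G.Adj u v ∧ u ≠ w ∧ v ≠ w ∧
      ((univ.filter fun y => G.Adj w y) ∪ {u, v}).card ≤ m := by
  classical
  set N : Finset V := univ.filter fun y => G.Adj w y with hN
  have hNcard : N.card = natDeg G w := rfl
  have hwN : w ∉ N := by simp [hN]
  have step1 : ∃ u v, G.Adj u v ∧ u ≠ w ∧ v ≠ w := by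
    by_contra hcon
    push_neg at hcon
    obtain ⟨a, b, hab⟩ : ∃ a b, G.Adj a b := by
      by_contra h
      push_neg at h
      exact hnt (by ext a b; simp [h a b])
    have hd1 : 1 ≤ natDeg G w := by
      by_cases haw : a = w
      · subst haw
        have : b ∈ N := by simp [hN, hab]
        calc 1 ≤ N.card := Finset.card_pos.2 ⟨b, this⟩
        _ = _ := hNcard
      · have hbw : b = w := hcon a b hab haw
        subst hbw
        have : a ∈ N := by simp [hN, hab.symm]
        calc 1 ≤ N.card := Finset.card_pos.2 ⟨a, this⟩
        _ = _ := hNcard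
    have hz : ((insert w N)ᶜ : Finset V).Nonempty := by
      rw [← Finset.card_pos, Finset.card_compl]
      have := Finset.card_insert_le w N
      omega
    obtain ⟨z, hz⟩ := hz
    rw [Finset.mem_compl, Finset.mem_insert] at hz
    push_neg at hz
    obtain ⟨hzw, hzN⟩ := hz
    have : 1 ≤ natDeg G z := le_trans hd1 (hw z)
    obtain ⟨y, hy⟩ : ∃ y, G.Adj z y := by
      rw [natDeg] at this
      obtain ⟨y, hy⟩ := Finset.card_pos.1 (lt_of_lt_of_le Nat.zero_lt_one this)
      exact ⟨y, (Finset.mem_filter.1 hy).2⟩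
    have hyw : y = w := hcon z y hy hzw
    subst hyw
    exact hzN (by simp [hN, hy.symm])
  by_cases hc : ∃ u v, G.Adj u v ∧ u ∈ N ∧ v ≠ w
  · obtain ⟨u, v, huv, huN, hvw⟩ := hc
    refine ⟨u, v, huv, fun h => hwN (h ▸ huN), hvw, ?_⟩
    have hsub : N ∪ {u, v} ⊆ insert v N := by
      intro x hx
      rcases Finset.mem_union.1 hx with hx | hx
      · exact Finset.mem_insert_of_mem hx
      · rcases Finset.mem_insert.1 hx with rfl | hx
        · exact Finset.mem_insert_of_mem huN
        · rw [Finset.mem_singleton] at hx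
          exact hx ▸ Finset.mem_insert_self _ _
    calc (N ∪ {u, v}).card ≤ (insert v N).card := Finset.card_le_card hsub
      _ ≤ N.card + 1 := Finset.card_insert_le _ _
      _ ≤ m := by omega
  · push_neg at hc
    have hd1 : natDeg G w ≤ 1 := by
      by_contra hd
      push_neg at hd
      obtain ⟨u, huN⟩ : N.Nonempty := Finset.card_pos.1 (by omega)
      have hu2 : 2 ≤ natDeg G u := le_trans hd (hw u)
      have : ¬ ((univ.filter fun y => G.Adj u y) ⊆ {w}) := by
        intro h
        have := Finset.card_le_card h
        simp only [Finset.card_singleton] at this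
        rw [natDeg] at hu2; omega
      obtain ⟨v, hv, hvw⟩ := Finset.not_subset.1 this
      rw [Finset.mem_singleton] at hvw
      exact hvw (hc u v (Finset.mem_filter.1 hv).2 huN)
    obtain ⟨u, v, huv, huw, hvw⟩ := step1
    refine ⟨u, v, huv, huw, hvw, ?_⟩
    calc (N ∪ {u, v}).card ≤ N.card + ({u, v} : Finset V).card := Finset.card_union_le _ _
      _ ≤ N.card + 2 := by
          have := Finset.card_insert_le u ({v} : Finset V)
          simp only [Finset.card_singleton] at this
          omega
      _ ≤ m := by omega

/-- for n = p₁p₂ > 4 with 2 ≤ p₁ ≤ p₂, p₂ > 2, and G a nontrivial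
graph on n vertices whose minimum degree d satisfies d < p₁ + p₂ − 2 (i.e. some
vertex w of minimum degree has degree d with d + 2 < p₁ + p₂), there is a vertex
labeling under which some vertex has strictly larger degree in the partial
transpose graph than in G (hence the normalized Laplacian is entangled in
ℂ^{p₁} × ℂ^{p₂} for that labeling). -/
theorem stmt_17 (p₁ p₂ : ℕ) (hp₁ : 2 ≤ p₁) (hp₁₂ : p₁ ≤ p₂) (hp₂ : 2 < p₂)
    (hn : 4 < p₁ * p₂)
    (G : SimpleGraph (Fin (p₁ * p₂))) (hnt : G ≠ ⊥)
    (hmin : ∃ w, (∀ x, natDeg G w ≤ natDeg G x) ∧ natDeg G w + 2 < p₁ + p₂) :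
    ∃ f : Fin (p₁ * p₂) ≃ Fin p₁ × Fin p₂,
      ∃ x, natDeg (G.map f.toEmbedding) x <
        natDeg (partialTranspose (G.map f.toEmbedding)) x := by
  classical
  obtain ⟨w, hw, hwd⟩ := hmin
  have hp1 : 0 < p₁ := by omega
  have hp2 : 0 < p₂ := by omega
  set a0 : Fin p₁ := ⟨0, hp1⟩ with ha0
  set a1 : Fin p₁ := ⟨1, by omega⟩ with ha1
  set b0 : Fin p₂ := ⟨0, hp2⟩ with hb0
  set b1 : Fin p₂ := ⟨1, by omega⟩ with hb1
  set z00 : Fin p₁ × Fin p₂ := (a0, b0) with hz00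
  set z01 : Fin p₁ × Fin p₂ := (a0, b1) with hz01
  set z10 : Fin p₁ × Fin p₂ := (a1, b0) with hz10
  set z11 : Fin p₁ × Fin p₂ := (a1, b1) with hz11
  have hsum_le : p₁ + p₂ ≤ p₁ * p₂ := by
    have h2 : 2 * p₂ ≤ p₁ * p₂ := Nat.mul_le_mul_right p₂ hp₁
    omega
  set d := natDeg G w with hd
  obtain ⟨u, v, huv, huw, hvw, hUcard⟩ := exists_good_edge G w hw hnt
    (by rw [Fintype.card_fin]; omega) (p₁ + p₂ - 2) (by omega) (by omega)
  set N : Finset (Fin (p₁ * p₂)) := univ.filter fun y => G.Adj w y with hN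
  have hNcard : N.card = d := rfl
  have hwN : w ∉ N := by simp [hN]
  have huvne : u ≠ v := huv.ne
  set T : Finset (Fin (p₁ * p₂)) := N \ {u, v} with hT
  have hTcard : T.card + 2 ≤ p₁ + p₂ - 2 := by
    have hdisj : Disjoint T ({u, v} : Finset (Fin (p₁ * p₂))) :=
      Finset.sdiff_disjoint
    have hun : T ∪ {u, v} = N ∪ {u, v} := by
      ext x
      simp only [hT, Finset.mem_union, Finset.mem_sdiff, Finset.mem_insert,
        Finset.mem_singleton]
      tauto
    have h2 : ({u, v} : Finset (Fin (p₁ * p₂))).card = 2 := by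
      rw [Finset.card_insert_of_notMem (by simpa using huvne), Finset.card_singleton]
    have hthis : (N ∪ {u, v}).card = T.card + 2 := by
      rw [← hun, Finset.card_union_of_disjoint hdisj, h2]
    omega
  -- the cross
  set Cfull : Finset (Fin p₁ × Fin p₂) := univ.filter fun y => y.1 = a0 ∨ y.2 = b0
    with hCfull
  have hCfullcard : Cfull.card = p₁ + p₂ - 1 := by
    have hsplit : Cfull = ({a0} ×ˢ (univ : Finset (Fin p₂))) ∪
        ((univ : Finset (Fin p₁)) ×ˢ {b0}) := by
      ext ⟨i, j⟩
      simp [hCfull, eq_comm]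
    have hinter : (({a0} ×ˢ (univ : Finset (Fin p₂))) ∩
        ((univ : Finset (Fin p₁)) ×ˢ {b0})) = {z00} := by
      ext ⟨i, j⟩
      simp [hz00, Prod.ext_iff, eq_comm]
    have hkey := Finset.card_union_add_card_inter
      ({a0} ×ˢ (univ : Finset (Fin p₂))) ((univ : Finset (Fin p₁)) ×ˢ {b0})
    rw [hinter] at hkey
    simp only [Finset.card_product, Finset.card_singleton, Finset.card_univ,
      Fintype.card_fin, one_mul, mul_one] at hkey
    rw [hsplit]
    omega
  have ha01 : a0 ≠ a1 := by simp [ha0, ha1, Fin.ext_iff]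
  have hb01 : b0 ≠ b1 := by simp [hb0, hb1, Fin.ext_iff]
  have hztriple : ({z00, z01, z10} : Finset (Fin p₁ × Fin p₂)).card = 3 := by
    have hne01 : z00 ≠ z01 := fun h => hb01 (congrArg Prod.snd h)
    have hne02 : z00 ≠ z10 := fun h => ha01 (congrArg Prod.fst h)
    have hne12 : z01 ≠ z10 := fun h => ha01 (congrArg Prod.fst h)
    rw [Finset.card_insert_of_notMem, Finset.card_insert_of_notMem,
      Finset.card_singleton]
    · simpa using hne12
    · simp only [Finset.mem_insert, Finset.mem_singleton]
      push_neg
      exact ⟨hne01, hne02⟩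
  have hzsub : ({z00, z01, z10} : Finset (Fin p₁ × Fin p₂)) ⊆ Cfull := by
    intro x hx
    simp only [Finset.mem_insert, Finset.mem_singleton] at hx
    rcases hx with rfl | rfl | rfl <;> simp [hCfull, hz00, hz01, hz10]
  set C' : Finset (Fin p₁ × Fin p₂) := Cfull \ {z00, z01, z10} with hC'
  have hC'card : C'.card = p₁ + p₂ - 4 := by
    rw [hC', Finset.card_sdiff_of_subset hzsub, hztriple, hCfullcard]
    omega
  have hTC : T.card ≤ C'.card := by omega
  obtain ⟨e⟩ : Nonempty (↥T ↪ ↥C') :=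
    Function.Embedding.nonempty_of_card_le (by simpa [Fintype.card_coe] using hTC)
  set g : Fin (p₁ * p₂) → Fin p₁ × Fin p₂ := fun x =>
    if x = w then z00 else if x = u then z01 else if x = v then z10
    else if h : x ∈ T then (e ⟨x, h⟩ : Fin p₁ × Fin p₂) else z00 with hg
  set S : Finset (Fin (p₁ * p₂)) := insert w (insert u (insert v T)) with hS
  have hwT : w ∉ T := fun h => hwN (Finset.mem_sdiff.1 h).1
  have huT : u ∉ T := fun h => by
    have := (Finset.mem_sdiff.1 h).2; simp at this
  have hvT : v ∉ T := fun h => by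
    have := (Finset.mem_sdiff.1 h).2; simp at this
  have gw : g w = z00 := by simp [hg]
  have gu : g u = z01 := by simp [hg, huw]
  have gv : g v = z10 := by simp [hg, hvw, (Ne.symm huvne : v ≠ u)]
  have gT : ∀ t (ht : t ∈ T), g t = (e ⟨t, ht⟩ : Fin p₁ × Fin p₂) := by
    intro t ht
    have htw : t ≠ w := fun h => hwT (h ▸ ht)
    have htu : t ≠ u := fun h => huT (h ▸ ht)
    have htv : t ≠ v := fun h => hvT (h ▸ ht)
    simp [hg, htw, htu, htv, ht]
  have hgC : ∀ {t}, t ∈ T → g t ∈ C' := by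
    intro t ht
    rw [gT t ht]
    exact (e ⟨t, ht⟩).2
  have hz00C : z00 ∉ C' := by simp [hC']
  have hz01C : z01 ∉ C' := by simp [hC']
  have hz10C : z10 ∉ C' := by simp [hC']
  have hne01 : z00 ≠ z01 := fun h => hb01 (congrArg Prod.snd h)
  have hne02 : z00 ≠ z10 := fun h => ha01 (congrArg Prod.fst h)
  have hne12 : z01 ≠ z10 := fun h => ha01 (congrArg Prod.fst h)
  have hinj : Set.InjOn g ↑S := by
    have hcases : ∀ x ∈ S, x = w ∨ x = u ∨ x = v ∨ x ∈ T := by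
      intro x hx
      simpa [hS, Finset.mem_insert] using hx
    intro x hx y hy hxy
    rcases hcases x (by simpa using hx) with rfl | rfl | rfl | hxT <;>
      rcases hcases y (by simpa using hy) with rfl | rfl | rfl | hyT <;>
      (try simp only [gw, gu, gv] at hxy)
    all_goals try rfl
    all_goals first
      | (rw [gT x hxT, gT y hyT] at hxy
         exact Subtype.mk_eq_mk.1 (e.injective (Subtype.coe_injective hxy)))
      | exact absurd hxy hne01
      | exact absurd hxy hne02
      | exact absurd hxy hne12
      | exact absurd hxy.symm hne01
      | exact absurd hxy.symm hne02
      | exact absurd hxy.symm hne12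
      | (exfalso; have h1 := hgC hyT; rw [← hxy] at h1; revert h1; simp [hC'])
      | (exfalso; have h1 := hgC hxT; rw [hxy] at h1; revert h1; simp [hC'])
  obtain ⟨f, hf⟩ := exists_equiv_extend (by simp) S g hinj
  have hwS : w ∈ S := by simp [hS]
  have huS : u ∈ S := by simp [hS]
  have hvS : v ∈ S := by simp [hS]
  have hfw : f w = z00 := by rw [hf w hwS, gw]
  have hfu : f u = z01 := by rw [hf u huS, gu]
  have hfv : f v = z10 := by rw [hf v hvS, gv]
  set G' := G.map f.toEmbedding with hG'
  have hmapadj : ∀ a b, G'.Adj (f a) (f b) ↔ G.Adj a b := by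
    intro a b
    rw [hG']
    constructor
    · rintro ⟨_, c, dd, hcd, hc, hd⟩
      have : c = a := f.injective hc
      subst this
      have : dd = b := f.injective hd
      subst this
      exact hcd
    · intro h
      exact ⟨f.injective.ne h.ne, a, b, h, rfl, rfl⟩
  have hNzero : ∀ t ∈ N, (f t).1 = a0 ∨ (f t).2 = b0 := by
    intro t htN
    by_cases htu : t = u
    · subst htu; rw [hfu]; left; rfl
    by_cases htv : t = v
    · subst htv; rw [hfv]; right; rfl
    have htT : t ∈ T := by
      rw [hT, Finset.mem_sdiff]
      exact ⟨htN, by simp [htu, htv]⟩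
    have htS : t ∈ S := by simp [hS, htT]
    have : f t ∈ C' := by rw [hf t htS]; exact hgC htT
    have := Finset.mem_filter.1 (Finset.mem_sdiff.1 this).1
    exact this.2
  set A : Finset (Fin p₁ × Fin p₂) := N.image (fun t => f t) ∪ {z11} with hA
  have hAsub : A ⊆ univ.filter fun y => (partialTranspose G').Adj (f w) y := by
    intro y hy
    rw [Finset.mem_filter]
    refine ⟨Finset.mem_univ _, ?_⟩
    rw [hA, Finset.mem_union] at hy
    rcases hy with hy | hy
    · obtain ⟨t, htN, rfl⟩ := Finset.mem_image.1 hy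
      have hadj : G.Adj w t := (Finset.mem_filter.1 htN).2
      show G'.Adj ((f w).1, (f t).2) ((f t).1, (f w).2)
      rcases hNzero t htN with h1 | h1
      · have e1 : ((f w).1, (f t).2) = f t := by
          rw [hfw, hz00]; exact Prod.ext_iff.2 ⟨h1.symm, rfl⟩
        have e2 : ((f t).1, (f w).2) = f w := by
          rw [hfw, hz00]; exact Prod.ext_iff.2 ⟨h1, rfl⟩
        rw [e1, e2]
        exact (hmapadj t w).2 hadj.symm
      · have e1 : ((f w).1, (f t).2) = f w := by
          rw [hfw, hz00]; exact Prod.ext_iff.2 ⟨rfl, h1⟩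
        have e2 : ((f t).1, (f w).2) = f t := by
          rw [hfw, hz00]; exact Prod.ext_iff.2 ⟨rfl, h1.symm⟩
        rw [e1, e2]
        exact (hmapadj w t).2 hadj
    · rw [Finset.mem_singleton] at hy
      subst hy
      show G'.Adj ((f w).1, z11.2) (z11.1, (f w).2)
      have e1 : ((f w).1, z11.2) = f u := by
        rw [hfw, hfu, hz00, hz01, hz11]
      have e2 : (z11.1, (f w).2) = f v := by
        rw [hfw, hfv, hz00, hz10, hz11]
      rw [e1, e2]
      exact (hmapadj u v).2 huv
  have hz11img : z11 ∉ N.image (fun t => f t) := by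
    intro h
    obtain ⟨t, htN, hft⟩ := Finset.mem_image.1 h
    rcases hNzero t htN with h1 | h1
    · rw [hft] at h1; exact ha01 h1.symm
    · rw [hft] at h1; exact hb01 h1.symm
  have hAcard : A.card = d + 1 := by
    rw [hA, Finset.card_union_of_disjoint (Finset.disjoint_singleton_right.2 hz11img),
      Finset.card_image_of_injOn (f.injective.injOn), hNcard, Finset.card_singleton]
  refine ⟨f, f w, ?_⟩
  have hdeg1 : natDeg G' (f w) = d := natDeg_map_equiv G f w
  have hdeg2 : d + 1 ≤ natDeg (partialTranspose G') (f w) := by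
    rw [natDeg, ← hAcard]
    exact Finset.card_le_card hAsub
  rw [hG'] at hdeg1 hdeg2
  omega
end

section
/- Let n = 2 p_2 with p_2 ≥ 3 (so n > 4), and let G be a graph on n vertices that is neither complete nor trivial. Then there exists a vertex labeling of G by {1,…,2}×{1,…,p_2} such that the normalized Laplacian of G is entangled in C^2 × C^{p_2}; equivalently, some vertex has differing degrees in G and the partial transpose graph under that labeling. -/
open Matrix Finset
open scoped Kronecker Classical ComplexOrder

lemma pt_adj {α β : Type*} (G : SimpleGraph (α × β)) (x y : α × β) :
    (partialTranspose G).Adj x y ↔ G.Adj (x.1, y.2) (y.1, x.2) := Iff.rfl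

lemma map_equiv_adj {α β : Type*} (G : SimpleGraph α) (f : α ≃ β) (x y : β) :
    (G.map f.toEmbedding).Adj x y ↔ G.Adj (f.symm x) (f.symm y) := by
  simp only [SimpleGraph.map_adj, Equiv.coe_toEmbedding]
  constructor
  · rintro ⟨-, a, b, h, rfl, rfl⟩
    simpa using h
  · intro h
    exact ⟨fun hxy => G.ne_of_adj h (by rw [hxy]), f.symm x, f.symm y, h, f.apply_symm_apply x, f.apply_symm_apply y⟩

/-- One swap step: adjust an equivalence to send `x` to `y`, changing nothing
whose image avoids `e x` and `y`. -/
lemma equiv_step {α β : Type*} [DecidableEq β] (e : α ≃ β) (x : α) (y : β) :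
    ∃ e' : α ≃ β, e' x = y ∧ ∀ z : α, e z ≠ e x → e z ≠ y → e' z = e z := by
  refine ⟨e.trans (Equiv.swap (e x) y), ?_, ?_⟩
  · simp [Equiv.swap_apply_left]
  · intro z h1 h2
    simp [Equiv.trans_apply, Equiv.swap_apply_of_ne_of_ne h1 h2]

/-- There is an equivalence with four prescribed (distinct) values. -/
lemma exists_equiv4 {α β : Type*} [Fintype α] [Fintype β] [DecidableEq β]
    (hc : Fintype.card α = Fintype.card β)
    {x1 x2 x3 x4 : α} {y1 y2 y3 y4 : β}
    (hx12 : x1 ≠ x2) (hx13 : x1 ≠ x3) (hx14 : x1 ≠ x4)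
    (hx23 : x2 ≠ x3) (hx24 : x2 ≠ x4) (hx34 : x3 ≠ x4)
    (hy12 : y1 ≠ y2) (hy13 : y1 ≠ y3) (hy14 : y1 ≠ y4)
    (hy23 : y2 ≠ y3) (hy24 : y2 ≠ y4) (hy34 : y3 ≠ y4) :
    ∃ e : α ≃ β, e x1 = y1 ∧ e x2 = y2 ∧ e x3 = y3 ∧ e x4 = y4 := by
  obtain ⟨e1, he1, _⟩ := equiv_step (Fintype.equivOfCardEq hc) x1 y1
  obtain ⟨e2, he2, he2'⟩ := equiv_step e1 x2 y2
  have e2x1 : e2 x1 = y1 := by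
    rw [he2' x1 (fun h => hx12 (e1.injective h)) (by rw [he1]; exact hy12), he1]
  obtain ⟨e3, he3, he3'⟩ := equiv_step e2 x3 y3
  have e3x1 : e3 x1 = y1 := by
    rw [he3' x1 (fun h => hx13 (e2.injective h)) (by rw [e2x1]; exact hy13), e2x1]
  have e3x2 : e3 x2 = y2 := by
    rw [he3' x2 (fun h => hx23 (e2.injective h)) (by rw [he2]; exact hy23), he2]
  obtain ⟨e4, he4, he4'⟩ := equiv_step e3 x4 y4
  have e4x1 : e4 x1 = y1 := by
    rw [he4' x1 (fun h => hx14 (e3.injective h)) (by rw [e3x1]; exact hy14), e3x1]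
  have e4x2 : e4 x2 = y2 := by
    rw [he4' x2 (fun h => hx24 (e3.injective h)) (by rw [e3x2]; exact hy24), e3x2]
  have e4x3 : e4 x3 = y3 := by
    rw [he4' x3 (fun h => hx34 (e3.injective h)) (by rw [he3]; exact hy34), he3]
  exact ⟨e4, e4x1, e4x2, e4x3, he4⟩

/-- for n = 2p₂ with p₂ ≥ 3 and G a graph on n vertices that is
neither complete nor trivial, there is a vertex labeling by {1,2} × {1,…,p₂} under
which some vertex has different degrees in G and in the partial transpose graph
(hence the normalized Laplacian of G is entangled in ℂ² × ℂ^{p₂} for that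
labeling). -/
theorem stmt_18 (p₂ : ℕ) (hp₂ : 3 ≤ p₂)
    (G : SimpleGraph (Fin (2 * p₂))) (hnt : G ≠ ⊥) (hnc : G ≠ ⊤) :
    ∃ f : Fin (2 * p₂) ≃ Fin 2 × Fin p₂,
      ∃ x, natDeg (partialTranspose (G.map f.toEmbedding)) x ≠
        natDeg (G.map f.toEmbedding) x := by
  by_contra hcon
  push_neg at hcon
  obtain ⟨k, rfl⟩ : ∃ k, p₂ = k + 3 := ⟨p₂ - 3, by omega⟩
  have h01 : (0 : Fin (k + 3)) ≠ 1 := by simp [Fin.ext_iff]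
  have flip : ∀ u v : Fin (2 * (k + 3)),
      (if G.Adj u v then 1 else 0) = (if G.Adj v u then 1 else 0) := by
    intro u v
    by_cases h : G.Adj u v
    · rw [if_pos h, if_pos h.symm]
    · rw [if_neg h, if_neg fun h' : G.Adj v u => h h'.symm]
  -- the key degree identity for every labeling
  have KEY : ∀ g : (Fin 2 × Fin (k + 3)) ≃ Fin (2 * (k + 3)),
      (∑ y : Fin (k + 3), if G.Adj (g (0, y)) (g (1, 0)) then 1 else 0)
        = ∑ y : Fin (k + 3), if G.Adj (g (0, 0)) (g (1, y)) then 1 else 0 := by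
    intro g
    have h1 := hcon g.symm ((0 : Fin 2), (0 : Fin (k + 3)))
    have hadj : ∀ x y, (G.map g.symm.toEmbedding).Adj x y ↔ G.Adj (g x) (g y) := by
      intro x y
      rw [map_equiv_adj]
      simp
    simp only [natDeg, Finset.card_filter, pt_adj, hadj, Fintype.sum_prod_type,
      Fin.sum_univ_two] at h1
    have hAC : (∑ y : Fin (k + 3), if G.Adj (g (0, y)) (g (0, 0)) then 1 else 0)
        = ∑ y : Fin (k + 3), if G.Adj (g (0, 0)) (g (0, y)) then 1 else 0 :=
      Finset.sum_congr rfl fun y _ => flip _ _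
    omega
  -- constancy of adjacency counts
  have CONST : ∀ a b r s : Fin (2 * (k + 3)), a ≠ b → a ≠ r → a ≠ s → b ≠ r → b ≠ s → r ≠ s →
      (if G.Adj r a then 1 else 0) + (if G.Adj r b then 1 else 0)
        = (if G.Adj s a then 1 else 0) + (if G.Adj s b then 1 else 0) := by
    intro a b r s hab har has hbr hbs hrs
    have hcard : Fintype.card (Fin 2 × Fin (k + 3)) = Fintype.card (Fin (2 * (k + 3))) := by
      simp [Fintype.card_prod]
    have h2 : ((0 : Fin 2), (0 : Fin (k + 3))) ≠ (1, 0) := by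
      simp [Prod.ext_iff]
    have h3 : ((0 : Fin 2), (0 : Fin (k + 3))) ≠ (0, 1) := by
      simp [Prod.ext_iff, h01]
    have h4 : ((0 : Fin 2), (0 : Fin (k + 3))) ≠ (1, 1) := by
      simp [Prod.ext_iff]
    have h5 : ((1 : Fin 2), (0 : Fin (k + 3))) ≠ (0, 1) := by
      simp [Prod.ext_iff]
    have h6 : ((1 : Fin 2), (0 : Fin (k + 3))) ≠ (1, 1) := by
      simp [Prod.ext_iff, h01]
    have h7 : ((0 : Fin 2), (1 : Fin (k + 3))) ≠ (1, 1) := by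
      simp [Prod.ext_iff]
    obtain ⟨g, hg1, hg2, hg3, hg4⟩ := exists_equiv4 hcard h2 h3 h4 h5 h6 h7
      hab.symm hbr hbs har has hrs
      (x1 := ((0 : Fin 2), (0 : Fin (k + 3)))) (x2 := (1, 0)) (x3 := (0, 1)) (x4 := (1, 1))
      (y1 := b) (y2 := a) (y3 := r) (y4 := s)
    set σ : (Fin 2 × Fin (k + 3)) ≃ (Fin 2 × Fin (k + 3)) :=
      Equiv.swap ((0 : Fin 2), (1 : Fin (k + 3))) (1, 1) with hσ
    have h2' : (0 : Fin 2) ≠ 1 := by decide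
    have hσ00 : σ ((0 : Fin 2), (0 : Fin (k + 3))) = (0, 0) := by
      rw [hσ]
      exact Equiv.swap_apply_of_ne_of_ne (by simp [Prod.ext_iff, h01]) (by simp [Prod.ext_iff, h2'])
    have hσ10 : σ ((1 : Fin 2), (0 : Fin (k + 3))) = (1, 0) := by
      rw [hσ]
      exact Equiv.swap_apply_of_ne_of_ne (by simp [Prod.ext_iff, h2']) (by simp [Prod.ext_iff, h01])
    have hσ01 : σ ((0 : Fin 2), (1 : Fin (k + 3))) = (1, 1) := by
      rw [hσ]; exact Equiv.swap_apply_left _ _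
    have hσ11 : σ ((1 : Fin 2), (1 : Fin (k + 3))) = (0, 1) := by
      rw [hσ]; exact Equiv.swap_apply_right _ _
    have hσ0y : ∀ y : Fin (k + 3), y ≠ 1 → σ (0, y) = (0, y) := by
      intro y hy
      rw [hσ]
      exact Equiv.swap_apply_of_ne_of_ne (by simp [Prod.ext_iff, hy]) (by simp [Prod.ext_iff, h2'])
    have hσ1y : ∀ y : Fin (k + 3), y ≠ 1 → σ (1, y) = (1, y) := by
      intro y hy
      rw [hσ]
      exact Equiv.swap_apply_of_ne_of_ne (by simp [Prod.ext_iff, h2']) (by simp [Prod.ext_iff, hy])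
    have k1 := KEY g
    have k2 := KEY (σ.trans g)
    simp only [Equiv.trans_apply, hσ00, hσ10] at k2
    rw [Finset.sum_eq_sum_sdiff_singleton_add (Finset.mem_univ (1 : Fin (k + 3))),
      Finset.sum_eq_sum_sdiff_singleton_add (Finset.mem_univ (1 : Fin (k + 3)))] at k1 k2
    rw [hg1, hg2, hg3, hg4] at k1
    simp only [hσ01, hσ11, hg1, hg2, hg3, hg4] at k2
    have t1 : (∑ y ∈ Finset.univ \ {(1 : Fin (k + 3))},
          if G.Adj (g (σ (0, y))) a then 1 else 0)
        = ∑ y ∈ Finset.univ \ {(1 : Fin (k + 3))}, if G.Adj (g (0, y)) a then 1 else 0 := by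
      refine Finset.sum_congr rfl fun y hy => ?_
      have hy1 : y ≠ 1 := by
        simp only [Finset.mem_sdiff, Finset.mem_singleton] at hy
        exact hy.2
      rw [hσ0y y hy1]
    have t2 : (∑ y ∈ Finset.univ \ {(1 : Fin (k + 3))},
          if G.Adj b (g (σ (1, y))) then 1 else 0)
        = ∑ y ∈ Finset.univ \ {(1 : Fin (k + 3))}, if G.Adj b (g (1, y)) then 1 else 0 := by
      refine Finset.sum_congr rfl fun y hy => ?_
      have hy1 : y ≠ 1 := by
        simp only [Finset.mem_sdiff, Finset.mem_singleton] at hy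
        exact hy.2
      rw [hσ1y y hy1]
    rw [t1, t2] at k2
    have f1 := flip b s
    have f2 := flip b r
    omega
  -- find a vertex with both a neighbour and a non-neighbour
  obtain ⟨p, q, hpq⟩ : ∃ p q, G.Adj p q := by
    by_contra hno
    push_neg at hno
    exact hnt (by ext x y; simp [hno x y])
  obtain ⟨s, t, hst, hnadj⟩ : ∃ s t, s ≠ t ∧ ¬G.Adj s t := by
    by_contra hno
    push_neg at hno
    refine hnc ?_
    ext x y
    simp only [SimpleGraph.top_adj]
    exact ⟨fun h => G.ne_of_adj h, fun h => hno x y h⟩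
  obtain ⟨w, u, z, hwu, hwz, hw1, hw2, hw3⟩ :
      ∃ w u z : Fin (2 * (k + 3)), G.Adj w u ∧ ¬G.Adj w z ∧ w ≠ u ∧ w ≠ z ∧ u ≠ z := by
    by_cases hp : ∀ x, x ≠ p → G.Adj p x
    · have hsp : s ≠ p := by
        rintro rfl
        exact hnadj (hp t hst.symm)
      have hpt : p ≠ t := by
        rintro rfl
        exact hnadj ((hp s hsp).symm)
      exact ⟨s, p, t, (hp s hsp).symm, hnadj, hsp, hst, hpt⟩
    · push_neg at hp
      obtain ⟨x, hxp, hpx⟩ := hp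
      have hqx : q ≠ x := by
        rintro rfl
        exact hpx hpq
      exact ⟨p, q, x, hpq, hpx, G.ne_of_adj hpq, hxp.symm, hqx⟩
  -- find two further vertices
  have hcard2 : 1 < (Finset.univ \ ({w, u, z} : Finset (Fin (2 * (k + 3))))).card := by
    have hsub : ({w, u, z} : Finset (Fin (2 * (k + 3)))).card ≤ 3 := by
      apply le_trans (Finset.card_insert_le _ _)
      have := Finset.card_insert_le u ({z} : Finset (Fin (2 * (k + 3))))
      simp at this ⊢
      omega
    rw [Finset.card_sdiff_of_subset (Finset.subset_univ _)]
    have : (Finset.univ : Finset (Fin (2 * (k + 3)))).card = 2 * (k + 3) := by simp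
    omega
  obtain ⟨x, hx, x', hx', hxx'⟩ := Finset.one_lt_card.mp hcard2
  simp only [Finset.mem_sdiff, Finset.mem_univ, Finset.mem_insert, Finset.mem_singleton,
    true_and, not_or] at hx hx'
  obtain ⟨hxw', hxu', hxz'⟩ := hx
  obtain ⟨hx'w', hx'u', hx'z'⟩ := hx'
  have hxw : x ≠ w := hxw'
  have hxu : x ≠ u := hxu'
  have hxz : x ≠ z := hxz'
  have hx'w : x' ≠ w := hx'w'
  have hx'u : x' ≠ u := hx'u'
  have hx'z : x' ≠ z := hx'z'
  -- now derive the contradiction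
  have e1 := CONST w x u z hxw.symm hw1 hw2 hxu hxz hw3
  rw [if_pos hwu.symm, if_neg (fun h : G.Adj z w => hwz h.symm)] at e1
  have hux : ¬G.Adj u x := by
    intro h
    rw [if_pos h] at e1
    split_ifs at e1 <;> omega
  have hzx : G.Adj z x := by
    by_contra h
    rw [if_neg hux, if_neg h] at e1
    omega
  have e1' := CONST w x' u z hx'w.symm hw1 hw2 hx'u hx'z hw3
  rw [if_pos hwu.symm, if_neg (fun h : G.Adj z w => hwz h.symm)] at e1'
  have hux' : ¬G.Adj u x' := by
    intro h
    rw [if_pos h] at e1'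
    split_ifs at e1' <;> omega
  have hzx' : G.Adj z x' := by
    by_contra h
    rw [if_neg hux', if_neg h] at e1'
    omega
  have e2 := CONST u x x' w hxu.symm hx'u.symm hw1.symm hxx' hxw hx'w
  rw [if_neg (fun h : G.Adj x' u => hux' h.symm), if_pos hwu] at e2
  have hx'x : G.Adj x' x := by
    by_contra h
    rw [if_neg h] at e2
    split_ifs at e2 <;> omega
  have hwx : ¬G.Adj w x := by
    intro h
    rw [if_pos hx'x, if_pos h] at e2
    omega
  have e3 := CONST u x' x w hx'u.symm hxu.symm hw1.symm hxx'.symm hx'w hxw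
  rw [if_neg (fun h : G.Adj x u => hux h.symm), if_pos hx'x.symm, if_pos hwu] at e3
  have hwx' : ¬G.Adj w x' := by
    intro h
    rw [if_pos h] at e3
    omega
  have e4 := CONST x x' w z hxx' hxw hxz hx'w hx'z hw2
  rw [if_neg hwx, if_neg hwx', if_pos hzx, if_pos hzx'] at e4
  omega
end
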